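/- Let r(n) denote the number of pairs (x,y) of integers with x^2 + y^2 = n. Then for every positive integer n, r(n) = 4 * ∑_{d | n} χ(d), where χ is the nontrivial Dirichlet character mod 4 (χ(d) = 1 if d ≡ 1 mod 4, χ(d) = -1 if d ≡ 3 mod 4, χ(d) = 0 if d even). -/

import Mathlib

/-- The nontrivial Dirichlet character mod 4 (Kronecker symbol (-4/d)). -/
def chi4 (d : ℕ) : ℤ := if d % 4 = 1 then 1 else if d % 4 = 3 then -1 else 0

open GaussianInt Zsqrtd
abbrev GI := GaussianInt

noncomputable section
namespace TwoSqAux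

def Nz (z : GI) : ℕ := z.norm.natAbs

lemma Nz_mul (z w : GI) : Nz (z*w) = Nz z * Nz w := by
  simp [Nz, Zsqrtd.norm_mul, Int.natAbs_mul]

lemma Nz_one : Nz 1 = 1 := by simp [Nz]

lemma Nz_conj (z : GI) : Nz (star z) = Nz z := by simp [Nz, Zsqrtd.norm_conj]

lemma Nz_eq_zero {z : GI} : Nz z = 0 ↔ z = 0 := by
  rw [Nz, Int.natAbs_eq_zero, GaussianInt.norm_eq_zero]

lemma Nz_unit_iff {z : GI} : IsUnit z ↔ Nz z = 1 := Zsqrtd.norm_eq_one_iff.symm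

lemma Nz_natCast (q : ℕ) : Nz (q : GI) = q^2 := by
  have : ((q:GI)).norm = (q:ℤ)^2 := by
    simp [Zsqrtd.norm_def]; ring
  rw [Nz, this]
  simp [Int.natAbs_pow]

lemma mul_star_self (z : GI) : z * star z = (Nz z : GI) := by
  have h := Zsqrtd.norm_eq_mul_conj z
  rw [← h, Nz]
  norm_cast
  simp [Int.natAbs_of_nonneg (GaussianInt.norm_nonneg z)]

lemma Nz_dvd {z w : GI} (h : z ∣ w) : Nz z ∣ Nz w := by
  obtain ⟨c, rfl⟩ := h; rw [Nz_mul]; exact Dvd.intro _ rfl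

lemma assoc_Nz {z w : GI} (h : Associated z w) : Nz z = Nz w :=
  Nat.dvd_antisymm (Nz_dvd h.dvd) (Nz_dvd h.symm.dvd)

def NA (a : Associates GI) : ℕ := Nz (Quot.out a)

lemma NA_mk (z : GI) : NA (Associates.mk z) = Nz z :=
  assoc_Nz (Associates.mk_quot_out z)

lemma NA_mul (a b : Associates GI) : NA (a*b) = NA a * NA b := by
  conv_lhs => rw [← Associates.quot_out a, ← Associates.quot_out b]
  rw [Associates.mk_mul_mk, NA_mk, Nz_mul]; rfl

lemma NA_one : NA (1 : Associates GI) = 1 := by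
  have : (1 : Associates GI) = Associates.mk 1 := by simp
  rw [this, NA_mk, Nz_one]

lemma NA_eq_zero {a : Associates GI} : NA a = 0 ↔ a = 0 := by
  conv_rhs => rw [← Associates.quot_out a]
  rw [NA, Nz_eq_zero, Associates.mk_eq_zero]

lemma NA_eq_one {a : Associates GI} : NA a = 1 ↔ a = 1 := by
  conv_rhs => rw [← Associates.quot_out a]
  rw [NA, ← Nz_unit_iff, Associates.mk_eq_one]

def As (n : ℕ) := {a : Associates GI // NA a = n}


lemma norm_one_cases {z : GI} (h : Nz z = 1) :
    z = 1 ∨ z = -1 ∨ z = ⟨0,1⟩ ∨ z = ⟨0,-1⟩ := by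
  obtain ⟨a,b⟩ := z
  have h2 : Zsqrtd.norm (⟨a,b⟩ : GI) = 1 := by
    have h3 := GaussianInt.norm_nonneg (⟨a,b⟩ : GI)
    unfold Nz at h; omega
  have hn : a*a + b*b = 1 := by
    rw [Zsqrtd.norm_def] at h2; linarith
  have ha : -1 ≤ a ∧ a ≤ 1 := by constructor <;> nlinarith
  have hb : -1 ≤ b ∧ b ≤ 1 := by constructor <;> nlinarith
  obtain ⟨ha1, ha2⟩ := ha; obtain ⟨hb1, hb2⟩ := hb
  interval_cases a <;> interval_cases b <;>
    simp_all [Zsqrtd.ext_iff, Zsqrtd.re_one, Zsqrtd.im_one] <;> omega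

def uI : GIˣ := ⟨⟨0,1⟩, ⟨0,-1⟩, by ext <;> simp, by ext <;> simp⟩

def unitsMap : Fin 4 → GIˣ := ![1, uI, -1, -uI]

lemma unitsMap_bij : Function.Bijective unitsMap := by
  constructor
  · intro x y hxy
    fin_cases x <;> fin_cases y <;>
      simp_all [unitsMap, Units.ext_iff, uI, Zsqrtd.ext_iff]
  · intro u
    rcases norm_one_cases (Nz_unit_iff.mp u.isUnit) with h|h|h|h
    · exact ⟨0, Units.ext (by simpa [unitsMap] using h.symm)⟩
    · exact ⟨2, Units.ext (by simp [unitsMap, h])⟩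
    · exact ⟨1, Units.ext (by simpa [unitsMap, uI] using h.symm)⟩
    · exact ⟨3, Units.ext (by simp [unitsMap, uI, h]; ext <;> simp)⟩

lemma card_units : Nat.card GIˣ = 4 := by
  rw [← Nat.card_congr (Equiv.ofBijective unitsMap unitsMap_bij)]
  simp

lemma card_pairs (n : ℕ) :
    Nat.card {p : ℤ × ℤ // p.1^2 + p.2^2 = (n:ℤ)} = Nat.card {z : GI // Nz z = n} := by
  refine Nat.card_congr ⟨fun p => ⟨⟨p.1.1, p.1.2⟩, ?_⟩, fun z => ⟨(z.1.re, z.1.im), ?_⟩, fun p => rfl, fun z => rfl⟩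
  · obtain ⟨⟨x,y⟩, hp⟩ := p
    have hnorm : Zsqrtd.norm (⟨x,y⟩ : GI) = (n:ℤ) := by
      rw [Zsqrtd.norm_def]; simp at hp ⊢; nlinarith [hp]
    simp [Nz, hnorm]
  · obtain ⟨z, hz⟩ := z
    have h3 := GaussianInt.norm_nonneg z
    have : z.norm = (n:ℤ) := by unfold Nz at hz; omega
    simp only [← this, Zsqrtd.norm_def]; ring

lemma card_reps (n : ℕ) (hn : n ≠ 0) :
    Nat.card {z : GI // Nz z = n} = 4 * Nat.card (As n) := by
  have key : ∀ p : GIˣ × As n, Nz ((Quot.out p.2.1 : GI) * (p.1 : GI)) = n := by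
    rintro ⟨u, a, ha⟩
    rw [Nz_mul, Nz_unit_iff.mp u.isUnit, mul_one]
    exact ha
  let f : GIˣ × As n → {z : GI // Nz z = n} := fun p => ⟨_, key p⟩
  have hb : Function.Bijective f := by
    constructor
    · rintro ⟨u, a, ha⟩ ⟨v, b, hb⟩ h
      simp only [f, Subtype.mk.injEq] at h
      have hassoc : Associated (Quot.out a) (Quot.out b) := ⟨u * v⁻¹, by
        have : (Quot.out a * (u : GI)) * (v⁻¹ : GIˣ) = (Quot.out b * (v:GI)) * (v⁻¹ : GIˣ) := by
          rw [h]
        calc Quot.out a * ((u : GI) * ((v⁻¹:GIˣ) : GI)) = (Quot.out a * (u : GI)) * (v⁻¹ : GIˣ) := by ring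
          _ = (Quot.out b * (v:GI)) * ((v⁻¹:GIˣ) : GI) := this
          _ = Quot.out b * ((v:GI) * ((v⁻¹:GIˣ) : GI)) := by ring
          _ = Quot.out b := by rw [← Units.val_mul, mul_inv_cancel, Units.val_one, mul_one]⟩
      have hab : a = b := by
        rw [← Associates.quot_out a, ← Associates.quot_out b,
          Associates.mk_eq_mk_iff_associated]
        exact hassoc
      subst hab
      have hout : (Quot.out a : GI) ≠ 0 := by
        intro h0
        apply hn
        rw [← ha]
        show NA a = 0
        unfold NA
        rw [h0]
        exact Nz_eq_zero.mpr rfl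
      have : (u : GI) = (v : GI) := mul_left_cancel₀ hout h
      simp [Prod.ext_iff, Units.ext_iff, this]; rfl
    · rintro ⟨z, hz⟩
      have hNA : NA (Associates.mk z) = n := by rw [NA_mk]; exact hz
      obtain ⟨u, hu⟩ := Associates.mk_quot_out z
      exact ⟨⟨u, ⟨Associates.mk z, hNA⟩⟩, Subtype.ext hu⟩
  rw [Nat.card_congr (Equiv.ofBijective f hb).symm, Nat.card_prod, card_units]

lemma star_dvd {x y : GI} (h : x ∣ y) : star x ∣ star y := by
  obtain ⟨c, rfl⟩ := h
  exact ⟨star c, by rw [star_mul]; ring⟩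

lemma prime_conj {z : GI} (h : Prime z) : Prime (star z) := by
  refine ⟨fun h0 => h.1 (by simpa using congrArg star h0), fun hu => h.2.1 ?_, ?_⟩
  · simpa using hu.star
  · intro a b hab
    have h2 : z ∣ star a * star b := by
      have := star_dvd hab
      rw [star_star, star_mul] at this
      exact this.trans (dvd_of_eq (mul_comm _ _))
    rcases h.2.2 _ _ h2 with hd | hd
    · exact Or.inl (by simpa using star_dvd hd)
    · exact Or.inr (by simpa using star_dvd hd)

/-- key: find a Gaussian prime over `q` dividing `z`. -/
lemma exists_prime_over {q : ℕ} (hq : q.Prime) {z : GI} (hdvd : q ∣ Nz z) :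
    ∃ π : GI, Prime π ∧ π ∣ z ∧ π ∣ (q : GI) := by
  have hq0 : (q : GI) ≠ 0 := by
    simp only [ne_eq, Nat.cast_eq_zero]
    exact hq.ne_zero
  have hqu : ¬ IsUnit (q : GI) := by
    rw [Nz_unit_iff, Nz_natCast]
    nlinarith [hq.two_le]
  obtain ⟨π, hirr, hπq⟩ := WfDvdMonoid.exists_irreducible_factor hqu hq0
  have hπ : Prime π := hirr.prime
  have hzz : π ∣ z * star z := by
    refine hπq.trans ?_
    obtain ⟨t, ht⟩ := hdvd
    rw [mul_star_self, ht]
    exact ⟨(t : GI), by push_cast; ring⟩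
  rcases hπ.2.2 _ _ hzz with hz | hz
  · exact ⟨π, hπ, hz, hπq⟩
  · refine ⟨star π, prime_conj hπ, by simpa using star_dvd hz, ?_⟩
    have := star_dvd hπq
    rwa [show star ((q:ℕ) : GI) = ((q:ℕ) : GI) from star_natCast q] at this

lemma split (m : ℕ) : ∀ n : ℕ, 0 < n → ∀ z : GI, Nat.Coprime m n → Nz z = m * n →
    ∃ x y : GI, z = x * y ∧ Nz x = m ∧ Nz y = n := by
  intro n
  induction n using Nat.strong_induction_on with
  | _ n IH =>
    intro hn z hcop hz
    rcases eq_or_ne n 1 with rfl | hn1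
    · exact ⟨z, 1, by rw [mul_one], by rwa [mul_one] at hz, Nz_one⟩
    obtain ⟨q, hq, hqn⟩ := Nat.exists_prime_and_dvd hn1
    have hqz : q ∣ Nz z := by
      rw [hz]; exact Dvd.dvd.mul_left hqn m
    obtain ⟨π, hπ, hπz, hπq⟩ := exists_prime_over hq hqz
    have hNπ : Nz π ∣ q^2 := by
      have := Nz_dvd hπq
      rwa [Nz_natCast] at this
    have hNπ1 : Nz π ≠ 1 := fun h1 => hπ.2.1 (Nz_unit_iff.mpr h1)
    obtain ⟨w, rfl⟩ := hπz
    have hNzmul : Nz π * Nz w = m * n := by rw [← Nz_mul, hz]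
    have hq2m : Nat.Coprime (q^2) m := ((hcop.coprime_dvd_right hqn).symm.pow_left 2)
    have hNπm : Nat.Coprime (Nz π) m := Nat.Coprime.coprime_dvd_left hNπ hq2m
    have hNπn : Nz π ∣ n := by
      refine (Nat.Coprime.dvd_of_dvd_mul_left hNπm ?_)
      exact ⟨Nz w, hNzmul.symm⟩
    obtain ⟨n', hn'⟩ := hNπn
    have hNπ0 : Nz π ≠ 0 := fun h0 => hπ.1 (Nz_eq_zero.mp h0)
    have hn'0 : 0 < n' := by
      rcases Nat.eq_zero_or_pos n' with h0 | h0
      · subst h0; rw [Nat.mul_zero] at hn'; omega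
      · exact h0
    have hNw : Nz w = m * n' := by
      have : Nz π * Nz w = Nz π * (m * n') := by
        rw [hNzmul, hn']; ring
      exact Nat.eq_of_mul_eq_mul_left (Nat.pos_of_ne_zero hNπ0) this
    have hn'lt : n' < n := by
      rw [hn']
      have h2 : 2 ≤ Nz π := by omega
      calc n' < 2 * n' := by omega
        _ ≤ Nz π * n' := Nat.mul_le_mul_right n' h2
    have hcop' : Nat.Coprime m n' := hcop.coprime_dvd_right ⟨Nz π, by rw [hn']; ring⟩
    obtain ⟨x, y', hxy, hx, hy'⟩ := IH n' hn'lt hn'0 w hcop' hNw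
    exact ⟨x, π * y', by rw [hxy]; ring, hx, by rw [Nz_mul, hy', hn']⟩

lemma coprime_of_Nz_coprime {x y : GI} (h : Nat.Coprime (Nz x) (Nz y)) : IsCoprime x y := by
  rw [← EuclideanDomain.gcd_isUnit_iff]
  set d := EuclideanDomain.gcd x y with hd
  have h1 : Nz d ∣ Nz x := Nz_dvd (EuclideanDomain.gcd_dvd_left x y)
  have h2 : Nz d ∣ Nz y := Nz_dvd (EuclideanDomain.gcd_dvd_right x y)
  have : Nz d ∣ 1 := h ▸ Nat.dvd_gcd h1 h2
  exact Nz_unit_iff.mpr (Nat.eq_one_of_dvd_one this)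

lemma dvd_of_dvd_mul_coprime {x' x y : GI} (h : x' ∣ x * y) (hc : Nat.Coprime (Nz x') (Nz y)) :
    x' ∣ x :=
  (coprime_of_Nz_coprime hc).dvd_of_dvd_mul_right h

lemma dvd_of_dvd_mul_coprime' {y' x y : GI} (h : y' ∣ x * y) (hc : Nat.Coprime (Nz y') (Nz x)) :
    y' ∣ y :=
  (coprime_of_Nz_coprime hc).dvd_of_dvd_mul_left h

lemma card_As_mul {m n : ℕ} (h : Nat.Coprime m n) (hm : 0 < m) (hn : 0 < n) :
    Nat.card (As (m*n)) = Nat.card (As m) * Nat.card (As n) := by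
  have key : ∀ p : As m × As n, NA (p.1.1 * p.2.1) = m * n := by
    rintro ⟨⟨a, ha⟩, ⟨b, hb⟩⟩
    rw [NA_mul, ha, hb]
  let f : As m × As n → As (m*n) := fun p => ⟨_, key p⟩
  have hbij : Function.Bijective f := by
    constructor
    · rintro ⟨⟨a, ha⟩, ⟨b, hb⟩⟩ ⟨⟨a', ha'⟩, ⟨b', hb'⟩⟩ hff
      replace hff : a * b = a' * b' := congrArg Subtype.val hff
      -- move to elements
      have hxy : Associated (Quot.out a * Quot.out b) (Quot.out a' * Quot.out b') := by
        rw [← Associates.mk_eq_mk_iff_associated, ← Associates.mk_mul_mk,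
          ← Associates.mk_mul_mk, Associates.quot_out, Associates.quot_out,
          Associates.quot_out, Associates.quot_out]
        exact hff
      have hNa : Nz (Quot.out a) = m := ha
      have hNb : Nz (Quot.out b) = n := hb
      have hNa' : Nz (Quot.out a') = m := ha'
      have hNb' : Nz (Quot.out b') = n := hb'
      have cop_a'b : Nat.Coprime (Nz (Quot.out a')) (Nz (Quot.out b)) := by
        rw [hNa', hNb]; exact h
      have cop_ab' : Nat.Coprime (Nz (Quot.out a)) (Nz (Quot.out b')) := by
        rw [hNa, hNb']; exact h
      have d1 : Quot.out a' ∣ Quot.out a :=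
        dvd_of_dvd_mul_coprime ((dvd_mul_right _ _).trans hxy.symm.dvd) cop_a'b
      have d2 : Quot.out a ∣ Quot.out a' :=
        dvd_of_dvd_mul_coprime ((dvd_mul_right _ _).trans hxy.dvd) cop_ab'
      have haa' : a = a' := by
        rw [← Associates.quot_out a, ← Associates.quot_out a',
          Associates.mk_eq_mk_iff_associated]
        exact associated_of_dvd_dvd d2 d1
      have cop_b'a : Nat.Coprime (Nz (Quot.out b')) (Nz (Quot.out a)) := by
        rw [hNb', hNa]; exact h.symm
      have cop_ba' : Nat.Coprime (Nz (Quot.out b)) (Nz (Quot.out a')) := by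
        rw [hNb, hNa']; exact h.symm
      have e1 : Quot.out b' ∣ Quot.out b :=
        dvd_of_dvd_mul_coprime' ((dvd_mul_left _ _).trans hxy.symm.dvd) cop_b'a
      have e2 : Quot.out b ∣ Quot.out b' :=
        dvd_of_dvd_mul_coprime' ((dvd_mul_left _ _).trans hxy.dvd) cop_ba'
      have hbb' : b = b' := by
        rw [← Associates.quot_out b, ← Associates.quot_out b',
          Associates.mk_eq_mk_iff_associated]
        exact associated_of_dvd_dvd e2 e1
      simp [haa', hbb']
    · rintro ⟨c, hc⟩
      obtain ⟨x, y, hxy, hx, hy⟩ := split m n hn (Quot.out c) h hc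
      refine ⟨⟨⟨Associates.mk x, by rw [NA_mk]; exact hx⟩,
               ⟨Associates.mk y, by rw [NA_mk]; exact hy⟩⟩, Subtype.ext ?_⟩
      show Associates.mk x * Associates.mk y = c
      rw [Associates.mk_mul_mk, ← hxy, Associates.quot_out]
  rw [Nat.card_congr (Equiv.ofBijective f hbij).symm, Nat.card_prod]

lemma Nz_pow (z : GI) (k : ℕ) : Nz (z^k) = (Nz z)^k := by
  induction k with
  | zero => simpa using Nz_one
  | succ k ih => rw [pow_succ, pow_succ, Nz_mul, ih]

lemma prime_of_Nz_prime {z : GI} (h : (Nz z).Prime) : Prime z := by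
  rw [← UniqueFactorizationMonoid.irreducible_iff_prime]
  constructor
  · rw [Nz_unit_iff]
    intro h1
    rw [h1] at h
    exact h.one_lt.ne' rfl
  · intro a b hab
    have hNab : Nz a * Nz b = Nz z := by rw [← Nz_mul, ← hab]
    rcases h.eq_one_or_self_of_dvd (Nz a) ⟨Nz b, hNab.symm⟩ with h1 | h1
    · exact Or.inl (Nz_unit_iff.mpr h1)
    · right
      rw [Nz_unit_iff]
      have hz0 : Nz z ≠ 0 := h.ne_zero
      rw [h1] at hNab
      have := h.one_lt
      nlinarith [hNab]

lemma classify {p : ℕ} (hp : p.Prime) {π : GI} (hπ : Prime π) (hNπ : Nz π = p) :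
    ∀ k : ℕ, ∀ z : GI, Nz z = p^k →
      ∃ i ≤ k, Associated z (π^i * (star π)^(k-i)) := by
  intro k
  induction k with
  | zero =>
    intro z hz
    refine ⟨0, le_refl 0, ?_⟩
    simp only [pow_zero, one_mul, Nat.sub_zero]
    exact associated_one_iff_isUnit.mpr (Nz_unit_iff.mpr (by simpa using hz))
  | succ k IH =>
    intro z hz
    have hpz : (p : GI) ∣ z * star z := by
      rw [mul_star_self, hz]
      exact ⟨((p^k : ℕ) : GI), by push_cast; ring⟩
    have hππ : π * star π = (p : GI) := by rw [mul_star_self, hNπ]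
    have hπp : π ∣ (p : GI) := ⟨star π, hππ.symm⟩
    have hNw_of : ∀ w : GI, Nz w * p = p^(k+1) → Nz w = p^k := by
      intro w hw
      have hp0 : 0 < p := hp.pos
      rw [pow_succ] at hw
      exact Nat.eq_of_mul_eq_mul_right hp0 hw
    rcases hπ.2.2 _ _ (hπp.trans hpz) with hd | hd
    · obtain ⟨w, rfl⟩ := hd
      have hw : Nz w = p^k := by
        apply hNw_of
        rw [← hz, Nz_mul, hNπ]; ring
      obtain ⟨i, hik, hassoc⟩ := IH w hw
      refine ⟨i+1, by omega, ?_⟩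
      have he : (k+1) - (i+1) = k - i := by omega
      have h2 : Associated (π * w) (π * (π^i * (star π)^(k-i))) := hassoc.mul_left π
      have he2 : π * (π^i * (star π)^(k-i)) = π^(i+1) * (star π)^((k+1)-(i+1)) := by
        rw [he, pow_succ]; ring
      rwa [he2] at h2
    · have hd2 : star π ∣ z := by
        have := star_dvd hd
        rwa [star_star] at this
      obtain ⟨w, rfl⟩ := hd2
      have hw : Nz w = p^k := by
        apply hNw_of
        rw [← hz, Nz_mul, Nz_conj, hNπ]; ring
      obtain ⟨i, hik, hassoc⟩ := IH w hw
      refine ⟨i, by omega, ?_⟩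
      have he : (k+1) - i = (k - i) + 1 := by omega
      have h2 : Associated (star π * w) (star π * (π^i * (star π)^(k-i))) := hassoc.mul_left _
      have he2 : star π * (π^i * (star π)^(k-i)) = π^i * (star π)^((k+1)-i) := by
        rw [he, pow_succ]; ring
      rwa [he2] at h2

lemma classify3 {p : ℕ} (hp : p.Prime) (hπ : Prime ((p:ℕ) : GI)) :
    ∀ k : ℕ, ∀ z : GI, Nz z = p^k →
      ∃ j, k = 2*j ∧ Associated z (((p:ℕ) : GI)^j) := by
  intro k
  induction k using Nat.strong_induction_on with
  | _ k IH =>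
    intro z hz
    rcases Nat.eq_zero_or_pos k with rfl | hk
    · exact ⟨0, rfl, associated_one_iff_isUnit.mpr (Nz_unit_iff.mpr (by simpa using hz))⟩
    have hpz : ((p:ℕ) : GI) ∣ z * star z := by
      rw [mul_star_self, hz]
      exact ⟨((p^(k-1) : ℕ) : GI), by
        push_cast
        rw [← pow_succ']
        congr 1
        omega⟩
    have hpd : ((p:ℕ) : GI) ∣ z := by
      rcases hπ.2.2 _ _ hpz with hd | hd
      · exact hd
      · have := star_dvd hd
        rwa [star_star, star_natCast] at this
    obtain ⟨w, rfl⟩ := hpd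
    have hNp : Nz ((p:ℕ) : GI) = p^2 := Nz_natCast p
    have hk2 : 2 ≤ k := by
      by_contra hlt
      have hk1 : k = 1 := by omega
      have : p^2 ∣ p^1 := by
        rw [← hk1, ← hz, ← hNp]
        exact Nz_dvd ⟨w, rfl⟩
      have := Nat.pow_dvd_pow_iff_le_right hp.one_lt |>.mp this
      omega
    have hw : Nz w = p^(k-2) := by
      have h1 : p^2 * Nz w = p^k := by rw [← hNp, ← Nz_mul]; exact hz
      have h2 : p^k = p^2 * p^(k-2) := by
        rw [← pow_add]
        congr 1
        omega
      exact Nat.eq_of_mul_eq_mul_left (pow_pos hp.pos 2) (h1.trans h2)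
    obtain ⟨j, hj, hassoc⟩ := IH (k-2) (by omega) w hw
    refine ⟨j+1, by omega, ?_⟩
    have h2 : Associated (((p:ℕ):GI) * w) (((p:ℕ):GI) * ((p:ℕ):GI)^j) := hassoc.mul_left _
    have he2 : ((p:ℕ):GI) * ((p:ℕ):GI)^j = ((p:ℕ):GI)^(j+1) := by
      rw [pow_succ]; ring
    rwa [he2] at h2

lemma NA_eq_iff {a : Associates GI} {z : GI} (h : Associated (Quot.out a) z) :
    a = Associates.mk z := by
  rw [← Associates.quot_out a, Associates.mk_eq_mk_iff_associated]
  exact h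

-- p = 2
def π2 : GI := ⟨1,1⟩

lemma Nz_π2 : Nz π2 = 2 := rfl

lemma star_π2_assoc : Associated (star π2) π2 := by
  refine Associated.symm ⟨⟨⟨0,-1⟩, ⟨0,1⟩, by ext <;> simp, by ext <;> simp⟩, ?_⟩
  show π2 * (⟨0,-1⟩ : GI) = star π2
  ext <;> simp [π2]

lemma card_As_two_pow (k : ℕ) : Nat.card (As (2^k)) = 1 := by
  have hπ2 : Prime π2 := prime_of_Nz_prime (by rw [Nz_π2]; exact Nat.prime_two)
  have hpow : Nz (π2^k) = 2^k := by rw [Nz_pow, Nz_π2]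
  rw [Nat.card_eq_one_iff_unique]
  constructor
  · constructor
    intro ⟨a, ha⟩ ⟨b, hb⟩
    have key : ∀ c : Associates GI, NA c = 2^k → c = Associates.mk (π2^k) := by
      intro c hc
      obtain ⟨i, hik, hassoc⟩ := classify Nat.prime_two hπ2 Nz_π2 k (Quot.out c) hc
      have h1 : Associated (π2^i * (star π2)^(k-i)) (π2^i * π2^(k-i)) :=
        Associated.mul_left _ (star_π2_assoc.pow_pow)
      have h2 : π2^i * π2^(k-i) = π2^k := by rw [← pow_add]; congr 1; omega
      exact NA_eq_iff (hassoc.trans (h2 ▸ h1))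
    have := key a ha
    have := key b hb
    simp_all
    rfl
  · exact ⟨⟨Associates.mk (π2^k), by rw [NA_mk, hpow]⟩⟩

-- p ≡ 3 [4]
lemma card_As_three_pow {p : ℕ} (hp : p.Prime) (h3 : p % 4 = 3) (k : ℕ) :
    Nat.card (As (p^k)) = if Even k then 1 else 0 := by
  haveI := Fact.mk hp
  have hπ : Prime ((p:ℕ) : GI) :=
    (GaussianInt.prime_iff_mod_four_eq_three_of_nat_prime p).mpr h3
  have hNp : Nz ((p:ℕ):GI) = p^2 := Nz_natCast p
  by_cases hk : Even k
  · obtain ⟨j, rfl⟩ := hk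
    rw [if_pos (by exact ⟨j, rfl⟩)]
    rw [Nat.card_eq_one_iff_unique]
    have hpowval : Nz (((p:ℕ):GI)^j) = p^(j+j) := by
      rw [Nz_pow, hNp, ← pow_mul]; congr 1; omega
    constructor
    · constructor
      intro ⟨a, ha⟩ ⟨b, hb⟩
      have key : ∀ c : Associates GI, NA c = p^(j+j) → c = Associates.mk (((p:ℕ):GI)^j) := by
        intro c hc
        obtain ⟨j', hj', hassoc⟩ := classify3 hp hπ (j+j) (Quot.out c) hc
        have : j' = j := by omega
        subst this
        exact NA_eq_iff hassoc
      have := key a ha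
      have := key b hb
      simp_all
      rfl
    · exact ⟨⟨Associates.mk (((p:ℕ):GI)^j), by rw [NA_mk, hpowval]⟩⟩
  · rw [if_neg hk]
    have : IsEmpty (As (p^k)) := by
      constructor
      intro ⟨a, ha⟩
      obtain ⟨j, hj, -⟩ := classify3 hp hπ k (Quot.out a) ha
      exact hk ⟨j, by omega⟩
    exact Nat.card_of_isEmpty

-- p ≡ 1 [4]
lemma exists_pi {p : ℕ} (hp : p.Prime) (h1 : p % 4 = 1) :
    ∃ π : GI, Prime π ∧ Nz π = p ∧ ¬ Associated π (star π) := by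
  haveI := Fact.mk hp
  obtain ⟨a, b, hab⟩ := Nat.Prime.sq_add_sq (p := p) (by omega)
  set π : GI := ⟨(a:ℤ), (b:ℤ)⟩ with hπdef
  have hN : Nz π = p := by
    have : Zsqrtd.norm π = ((a^2 + b^2 : ℕ) : ℤ) := by
      rw [Zsqrtd.norm_def]; push_cast; ring
    rw [Nz, this, hab]
    exact Int.natAbs_natCast p
  have hprime : Prime π := prime_of_Nz_prime (by rwa [hN])
  refine ⟨π, hprime, hN, ?_⟩
  rintro ⟨u, hu⟩
  have hu1 : Nz (u : GI) = 1 := Nz_unit_iff.mp u.isUnit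
  have hstar : star π = (⟨(a:ℤ), -(b:ℤ)⟩ : GI) := by ext <;> simp [hπdef]
  have hp2 : 2 ≤ p := hp.two_le
  rcases norm_one_cases hu1 with h | h | h | h <;> rw [h] at hu
  · -- u = 1 : b = 0
    rw [mul_one, hstar] at hu
    have hb : (b:ℤ) = -(b:ℤ) := congrArg Zsqrtd.im hu
    have hb0 : b = 0 := by omega
    rw [hb0] at hab
    have hdvd : a ∣ p := ⟨a, by rw [← hab]; ring⟩
    rcases (Nat.Prime.eq_one_or_self_of_dvd hp a hdvd) with h2 | h2 <;> nlinarith [hab]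
  · -- u = -1 : a = 0
    rw [hstar] at hu
    have : π * -1 = -π := by ring
    rw [this] at hu
    have ha : -(a:ℤ) = (a:ℤ) := congrArg Zsqrtd.re hu
    have ha0 : a = 0 := by omega
    rw [ha0] at hab
    have hdvd : b ∣ p := ⟨b, by rw [← hab]; ring⟩
    rcases (Nat.Prime.eq_one_or_self_of_dvd hp b hdvd) with h2 | h2 <;> nlinarith [hab]
  · -- u = i : π * ⟨0,1⟩ = ⟨-b, a⟩
    have hre : π * (⟨0,1⟩ : GI) = (⟨-(b:ℤ), (a:ℤ)⟩ : GI) := by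
      ext <;> simp [hπdef]
    rw [hre, hstar] at hu
    have h2 : -(b:ℤ) = (a:ℤ) := congrArg Zsqrtd.re hu
    have hb0 : a = 0 ∧ b = 0 := by omega
    rw [hb0.1, hb0.2] at hab
    omega
  · -- u = -i : π * ⟨0,-1⟩ = ⟨b, -a⟩
    have hre : π * (⟨0,-1⟩ : GI) = (⟨(b:ℤ), -(a:ℤ)⟩ : GI) := by
      ext <;> simp [hπdef]
    rw [hre, hstar] at hu
    have h2 : (b:ℤ) = (a:ℤ) := congrArg Zsqrtd.re hu
    have hba : b = a := by omega
    have h2p : 2 ∣ p := ⟨a^2, by rw [← hab, hba]; ring⟩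
    have := (Nat.Prime.eq_one_or_self_of_dvd hp 2 h2p)
    omega

lemma inj_classes {π : GI} (hπ : Prime π) (hns : ¬ Associated π (star π)) :
    ∀ {k i i' : ℕ}, i ≤ k → i' ≤ k →
      Associated (π^i * (star π)^(k-i)) (π^i' * (star π)^(k-i')) → i = i' := by
  have key : ∀ {k i i' : ℕ}, i ≤ k → i' ≤ k → i < i' →
      ¬ Associated (π^i * (star π)^(k-i)) (π^i' * (star π)^(k-i')) := by
    intro k i i' hik hik' hlt hassoc
    have hdvd : π^i * π ∣ π^i * (star π)^(k-i) := by
      have h1 : π^(i+1) ∣ π^i' := pow_dvd_pow π (by omega)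
      have h2 : π^i' ∣ π^i * (star π)^(k-i) :=
        (dvd_mul_right _ _).trans hassoc.symm.dvd
      rw [← pow_succ]
      exact h1.trans h2
    have hπ0 : π^i ≠ 0 := pow_ne_zero _ hπ.ne_zero
    have hd : π ∣ (star π)^(k-i) := (mul_dvd_mul_iff_left hπ0).mp hdvd
    have : π ∣ star π := hπ.dvd_of_dvd_pow hd
    exact hns (hπ.associated_of_dvd (prime_conj hπ) this)
  intro k i i' hik hik' hassoc
  rcases lt_trichotomy i i' with h | h | h
  · exact absurd hassoc (key hik hik' h)
  · exact h
  · exact absurd hassoc.symm (key hik' hik h)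

lemma card_As_one_pow {p : ℕ} (hp : p.Prime) {π : GI} (hπ : Prime π) (hN : Nz π = p)
    (hns : ¬ Associated π (star π)) (k : ℕ) :
    Nat.card (As (p^k)) = k + 1 := by
  have hval : ∀ i : Fin (k+1), Nz (π^(i:ℕ) * (star π)^(k-(i:ℕ))) = p^k := by
    intro i
    rw [Nz_mul, Nz_pow, Nz_pow, Nz_conj, hN, ← pow_add]
    congr 1
    omega
  let g : Fin (k+1) → As (p^k) := fun i =>
    ⟨Associates.mk (π^(i:ℕ) * (star π)^(k-(i:ℕ))), by rw [NA_mk]; exact hval i⟩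
  have hbij : Function.Bijective g := by
    constructor
    · intro i j hij
      have : Associates.mk (π^(i:ℕ) * (star π)^(k-(i:ℕ)))
          = Associates.mk (π^(j:ℕ) * (star π)^(k-(j:ℕ))) := congrArg Subtype.val hij
      rw [Associates.mk_eq_mk_iff_associated] at this
      exact Fin.ext (inj_classes hπ hns (by omega) (by omega) this)
    · rintro ⟨c, hc⟩
      obtain ⟨i, hik, hassoc⟩ := classify hp hπ hN k (Quot.out c) hc
      refine ⟨⟨i, by omega⟩, ?_⟩
      simp only [g]
      exact Subtype.ext (NA_eq_iff hassoc).symm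
  rw [← Nat.card_congr (Equiv.ofBijective g hbij)]
  simp


lemma chi4_mul (m n : ℕ) : chi4 (m*n) = chi4 m * chi4 n := by
  have hm := Nat.mod_lt m (show 0 < 4 by norm_num)
  have hn := Nat.mod_lt n (show 0 < 4 by norm_num)
  have key : (m * n) % 4 = (m % 4) * (n % 4) % 4 := Nat.mul_mod m n 4
  unfold chi4
  rw [key]
  interval_cases h1 : m % 4 <;> interval_cases h2 : n % 4 <;> norm_num

lemma chi4_pow (p i : ℕ) : chi4 (p^i) = (chi4 p)^i := by
  induction i with
  | zero => simp [chi4]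
  | succ i ih => rw [pow_succ, pow_succ, chi4_mul, ih]

lemma card_As_one : Nat.card (As 1) = 1 := by
  rw [Nat.card_eq_one_iff_unique]
  exact ⟨⟨fun a b => Subtype.ext ((NA_eq_one.mp a.2).trans (NA_eq_one.mp b.2).symm)⟩,
    ⟨⟨1, NA_one⟩⟩⟩

noncomputable def F : ArithmeticFunction ℤ :=
  ⟨fun n => if n = 0 then 0 else (Nat.card (As n) : ℤ), by simp⟩

def G : ArithmeticFunction ℤ :=
  ⟨fun n => ∑ d ∈ n.divisors, chi4 d, by simp⟩

def X : ArithmeticFunction ℤ := ⟨fun n => chi4 n, by simp [chi4]⟩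

lemma hX : X.IsMultiplicative := by
  constructor
  · show chi4 1 = 1
    simp [chi4]
  · intro m n _
    exact chi4_mul m n

lemma hG : G.IsMultiplicative := by
  have : G = ↑ArithmeticFunction.zeta * X := by
    ext n
    rw [ArithmeticFunction.coe_zeta_mul_apply]
    rfl
  rw [this]
  exact (ArithmeticFunction.isMultiplicative_zeta.natCast).mul hX

lemma hF : F.IsMultiplicative := by
  constructor
  · show (if (1:ℕ) = 0 then (0:ℤ) else (Nat.card (As 1) : ℤ)) = 1
    rw [if_neg one_ne_zero, card_As_one]
    norm_num
  · intro m n hcop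
    show (if m*n = 0 then (0:ℤ) else (Nat.card (As (m*n)) : ℤ)) = _
    rcases eq_or_ne m 0 with rfl | hm
    · simp [F]
    rcases eq_or_ne n 0 with rfl | hn
    · simp [F]
    rw [if_neg (by positivity), card_As_mul hcop (Nat.pos_of_ne_zero hm) (Nat.pos_of_ne_zero hn)]
    push_cast
    rw [show (F m : ℤ) = (Nat.card (As m) : ℤ) from by simp [F, hm],
      show (F n : ℤ) = (Nat.card (As n) : ℤ) from by simp [F, hn]]

lemma FG_prime_pow (p k : ℕ) (hp : p.Prime) : F (p^k) = G (p^k) := by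
  have hpk0 : p^k ≠ 0 := pow_ne_zero _ hp.ne_zero
  have hFval : F (p^k) = (Nat.card (As (p^k)) : ℤ) := by simp [F, hpk0, hp.ne_zero]
  have hGval : G (p^k) = ∑ i ∈ Finset.range (k+1), (chi4 p)^i := by
    show (∑ d ∈ (p^k).divisors, chi4 d) = _
    rw [Nat.sum_divisors_prime_pow hp]
    exact Finset.sum_congr rfl fun i _ => chi4_pow p i
  rcases (show p = 2 ∨ p % 4 = 1 ∨ p % 4 = 3 by
    have := hp.two_le
    rcases Nat.Prime.eq_two_or_odd hp with h | h
    · exact Or.inl h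
    · right; omega) with h | h | h
  · subst h
    rw [hFval, hGval, card_As_two_pow]
    have : chi4 2 = 0 := by simp [chi4]
    rw [this]
    rw [Finset.sum_eq_single 0]
    · norm_num
    · intro i _ hi
      exact zero_pow hi
    · intro h0
      simp at h0
  · obtain ⟨π, hπ, hN, hns⟩ := exists_pi hp h
    rw [hFval, hGval, card_As_one_pow hp hπ hN hns]
    have : chi4 p = 1 := by simp [chi4, h]
    rw [this]
    simp
  · rw [hFval, hGval, card_As_three_pow hp h]
    have : chi4 p = -1 := by simp [chi4, h]
    rw [this, neg_one_geom_sum]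
    rcases Nat.even_or_odd k with he | he
    · rw [if_pos he, if_neg (by simp [Nat.even_add_one, he])]
      norm_num
    · rw [if_neg (by simpa using he), if_pos (by simpa [Nat.even_add_one] using he)]
      norm_num

lemma F_eq_G : F = G :=
  (ArithmeticFunction.IsMultiplicative.eq_iff_eq_on_prime_powers F hF G hG).mpr
    fun p i hp => FG_prime_pow p i hp


end TwoSqAux
end


theorem sum_two_squares_count (n : ℕ) (hn : 0 < n) :
    (Nat.card {p : ℤ × ℤ // p.1 ^ 2 + p.2 ^ 2 = (n : ℤ)} : ℤ) =
      4 * ∑ d ∈ n.divisors, chi4 d := by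
  rw [TwoSqAux.card_pairs n, TwoSqAux.card_reps n hn.ne']
  have h1 : (∑ d ∈ n.divisors, chi4 d) = TwoSqAux.G n := rfl
  have h2 : TwoSqAux.G n = TwoSqAux.F n := by rw [TwoSqAux.F_eq_G]
  have h3 : TwoSqAux.F n = (Nat.card (TwoSqAux.As n) : ℤ) := by
    simp [TwoSqAux.F, hn.ne']
  rw [h1, h2, h3]
  push_cast
  ring
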